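/- Let u be a nonzero integer and let a be the largest divisor of k such that -u is a perfect a-th power, say -u = v^a with b = k/a. Then the polynomial X^b - v is irreducible over the rationals. -/

import Mathlib

open Polynomial IntermediateField

universe u

-- Lemma A: linear relations in a quadratic-minpoly element are trivial
theorem capelli_lin_indep {K F : Type*} [Field K] [Field F] [Algebra K F] {g : F} {a : K}
    (hmin : minpoly K g = X ^ 2 - C a) (p q : K)
    (h : algebraMap K F p + algebraMap K F q * g = 0) : p = 0 ∧ q = 0 := by
  have hfz : (C q * X + C p : K[X]) = 0 := by
    by_contra hne
    have hdvd : minpoly K g ∣ C q * X + C p := minpoly.dvd K g (by simp only [map_add, aeval_mul, aeval_C, aeval_X]; linear_combination h)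
    have h2 : (2 : WithBot ℕ) ≤ degree (C q * X + C p) := by
      calc (2 : WithBot ℕ) = degree (X ^ 2 - C a) := (degree_X_pow_sub_C (by norm_num) a).symm
        _ ≤ _ := degree_le_of_dvd (hmin ▸ hdvd) hne
    have h3 : degree (C q * X + C p) ≤ 1 := by
      apply (degree_add_le _ _).trans
      simp only [sup_le_iff]
      constructor
      · exact (degree_mul_le _ _).trans (by simpa using add_le_add (degree_C_le (a := q)) (degree_X_le (R := K)))
      · exact degree_C_le.trans (by norm_num)
    exact absurd (h2.trans h3) (by norm_num)
  constructor
  · have := congrArg (fun f => Polynomial.coeff f 0) hfz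
    simpa using this
  · have := congrArg (fun f => Polynomial.coeff f 1) hfz
    simpa using this

-- representation of elements in quadratic extension generated by power basis
theorem capelli_repr {K F : Type*} [Field K] [Field F] [Algebra K F] {g : F}
    (hint : IsIntegral K g) (htop : Algebra.adjoin K ({g} : Set F) = ⊤)
    (hdeg : (minpoly K g).natDegree = 2) (y : F) :
    ∃ c d : K, y = algebraMap K F c + algebraMap K F d * g := by
  have hy : y ∈ Algebra.adjoin K ({g} : Set F) := htop ▸ Algebra.mem_top
  rw [Algebra.adjoin_singleton_eq_range_aeval] at hy
  obtain ⟨f, hf⟩ := hy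
  have hf' : (Polynomial.aeval g) f = y := hf
  rw [← hf']
  have hmonic := minpoly.monic hint
  have haev : (Polynomial.aeval g) (f %ₘ minpoly K g) = (Polynomial.aeval g) f :=
    aeval_modByMonic_eq_self_of_root (minpoly.aeval K g)
  have hdlt : degree (f %ₘ minpoly K g) ≤ 1 := by
    have := degree_modByMonic_lt f hmonic
    rw [degree_eq_natDegree (minpoly.ne_zero hint), hdeg] at this
    exact Order.le_of_lt_succ (by exact_mod_cast this)
  refine ⟨(f %ₘ minpoly K g).coeff 0, (f %ₘ minpoly K g).coeff 1, ?_⟩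
  conv_lhs => rw [← haev, eq_X_add_C_of_degree_le_one hdlt]
  simp only [map_add, aeval_mul, aeval_C, aeval_X]
  ring

theorem capelli_two_pow : ∀ (t : ℕ), 1 ≤ t → ∀ {K : Type u} [Field K] (a : K),
    (∀ y : K, y ^ 2 ≠ a) → (2 ≤ t → ∀ y : K, a ≠ -4 * y ^ 4) →
    Irreducible (X ^ (2 ^ t) - C a) := by
  intro t ht
  induction t, ht using Nat.le_induction with
  | base =>
    intro K _ a hsq _
    exact pow_one 2 ▸ X_pow_sub_C_irreducible_of_prime Nat.prime_two hsq
  | succ t ht IH =>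
    intro K _ a hsq h4
    have h4' := h4 (by omega)
    rw [pow_succ]
    apply X_pow_mul_sub_C_irreducible (X_pow_sub_C_irreducible_of_prime Nat.prime_two hsq)
    intro E _ _ x hx
    have hint : IsIntegral K x := by
      by_contra hni
      have := minpoly.eq_zero hni
      rw [this] at hx
      exact X_pow_sub_C_ne_zero (by positivity) a hx.symm
    set F := K⟮x⟯
    set g := IntermediateField.AdjoinSimple.gen K x with hgdef
    have hmin : minpoly K g = X ^ 2 - C a := by
      rw [hgdef, IntermediateField.minpoly_gen, hx]
    have hintg : IsIntegral K g := by
      rw [hgdef, ← adjoin.powerBasis_gen hint]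
      exact (adjoin.powerBasis hint).isIntegral_gen
    have htop : Algebra.adjoin K ({g} : Set F) = ⊤ := by
      rw [hgdef, ← adjoin.powerBasis_gen hint]
      exact (adjoin.powerBasis hint).adjoin_gen_eq_top
    have hdeg : (minpoly K g).natDegree = 2 := by rw [hmin, natDegree_X_pow_sub_C]
    have hgsq : g ^ 2 = algebraMap K F a := by
      have h0 := minpoly.aeval K g
      rw [hmin, map_sub, map_pow, aeval_X, aeval_C, sub_eq_zero] at h0
      exact h0
    apply IH g
    · -- g is not a square in F
      intro y hy
      obtain ⟨c, d, hcd⟩ := capelli_repr hintg htop hdeg y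
      rw [hcd] at hy
      have heq : algebraMap K F (c^2 + a*d^2) + algebraMap K F (2*c*d - 1) * g = 0 := by
        simp only [map_add, map_mul, map_pow, map_sub, map_one, map_ofNat]
        linear_combination hy - (algebraMap K F d)^2 * hgsq
      obtain ⟨e1, e2⟩ := capelli_lin_indep hmin _ _ heq
      exact h4' c (by linear_combination 4*c^2*e1 - a*(2*c*d+1)*e2)
    · -- g is not of the form -4 y^4 in F
      intro _ y hy
      obtain ⟨c, d, hcd⟩ := capelli_repr hintg htop hdeg y
      rw [hcd] at hy
      have hy2 : (algebraMap K F c + algebraMap K F d * g)^2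
          = (algebraMap K F c)^2 + algebraMap K F a * (algebraMap K F d)^2
            + 2 * algebraMap K F c * algebraMap K F d * g := by
        linear_combination (algebraMap K F d)^2 * hgsq
      have hy4 : (algebraMap K F c + algebraMap K F d * g)^4
          = ((algebraMap K F c)^2 + algebraMap K F a * (algebraMap K F d)^2)^2
            + algebraMap K F a * (2 * algebraMap K F c * algebraMap K F d)^2
            + 2 * ((algebraMap K F c)^2 + algebraMap K F a * (algebraMap K F d)^2)
              * (2 * algebraMap K F c * algebraMap K F d) * g := by
        linear_combination ((algebraMap K F c + algebraMap K F d * g)^2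
          + ((algebraMap K F c)^2 + algebraMap K F a * (algebraMap K F d)^2)
          + (2 * algebraMap K F c * algebraMap K F d) * g) * hy2
          + (2 * algebraMap K F c * algebraMap K F d)^2 * hgsq
      have heq : algebraMap K F (-4*((c^2+a*d^2)^2 + a*(2*c*d)^2))
          + algebraMap K F (-8*((c^2+a*d^2)*(2*c*d)) - 1) * g = 0 := by
        simp only [map_add, map_mul, map_pow, map_sub, map_one, map_neg, map_ofNat]
        linear_combination -hy + 4*hy4
      obtain ⟨e1, e2⟩ := capelli_lin_indep hmin _ _ heq
      exact h4' (2*(c^2+a*d^2)) (by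
        linear_combination (-16*(c^2+a*d^2)^2)*e1 + a*(8*(c^2+a*d^2)*(2*c*d)-1)*e2)

theorem capelli_main {K : Type u} [Field K] (m t : ℕ) (hm_odd : Odd m) (a : K)
    (hsq : ∀ y : K, y ^ 2 ≠ a) (h4 : 2 ≤ t → ∀ y : K, a ≠ -4 * y ^ 4) (ht1 : 1 ≤ t)
    (E : Type u) [Field E] [Algebra K E] (x : E) (hx : minpoly K x = X ^ m - C a) :
    Irreducible (X ^ 2 ^ t - C (AdjoinSimple.gen K x)) := by
  have hm_pos : 0 < m := by
    rcases hm_odd with ⟨c, hc⟩; omega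
  have hint : IsIntegral K x := by
    by_contra hni
    have := minpoly.eq_zero hni
    rw [this] at hx
    exact X_pow_sub_C_ne_zero hm_pos _ hx.symm
  haveI := adjoin.finiteDimensional hint
  set g := AdjoinSimple.gen K x with hgdef
  have hfr : Module.finrank K K⟮x⟯ = m := by
    rw [adjoin.finrank hint, hx, natDegree_X_pow_sub_C]
  have hnormg : Algebra.norm K g = a := by
    have h0 := Algebra.PowerBasis.norm_gen_eq_coeff_zero_minpoly (adjoin.powerBasis hint)
    rw [adjoin.powerBasis_gen hint, minpoly_gen, hx] at h0
    rw [hgdef, h0, adjoin.powerBasis_dim, hx, natDegree_X_pow_sub_C]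
    simp [coeff_X_pow, hm_pos.ne, hm_pos.ne', hm_odd.neg_one_pow]
  apply capelli_two_pow t ht1 g
  · -- g is not a square
    intro y hy
    exact hsq (Algebra.norm K y) (by rw [← map_pow, hy, hnormg])
  · -- g is not of the form -4 y^4
    intro ht2 y hy
    obtain ⟨k, hk⟩ := hm_odd
    set r : K := Algebra.norm K y with hrdef
    have hnv : a = (-4) ^ m * r ^ 4 := by
      rw [← hnormg, hy]
      rw [show ((-4 : K⟮x⟯) * y ^ 4) = algebraMap K K⟮x⟯ (-4) * y ^ 4 by rw [map_neg, map_ofNat]]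
      rw [map_mul, Algebra.norm_algebraMap, map_pow, hfr]
    have h16 : ((2:K)^k)^4 = (((-4:K))^2)^k := by
      rw [← pow_mul, ← pow_mul, mul_comm k 4, pow_mul, pow_mul]
      norm_num
    refine h4 ht2 (2 ^ k * r) ?_
    rw [hnv, hk, pow_succ, pow_mul]
    linear_combination (4 * r^4) * h16

open Polynomial in
theorem stmt_5 (b : ℕ) (hb : 0 < b) (v : ℤ)
    (h1 : ∀ r : ℕ, r.Prime → r ∣ b → ¬ ∃ w : ℤ, w ^ r = v)
    (h2 : 4 ∣ b → ¬ ∃ w : ℤ, v = -4 * w ^ 4) :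
    Irreducible (X ^ b - C (v : ℚ)) := by
  have hvq : ∀ (n : ℕ) (w : ℚ) (z : ℤ), 0 < n → w ^ n = (z : ℚ) → ∃ w' : ℤ, (w' : ℚ) = w := by
    intro n w z hn hw
    have : IsIntegral ℤ w := ⟨X ^ n - C z, monic_X_pow_sub_C z hn.ne', by
      simp only [eval₂_sub, eval₂_pow, eval₂_X, eval₂_C, Int.coe_castRingHom]
      rw [hw]; simp⟩
    exact IsIntegrallyClosed.isIntegral_iff.mp this
  have h1' : ∀ r : ℕ, r.Prime → r ∣ b → ∀ w : ℚ, w ^ r ≠ (v : ℚ) := by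
    intro r hr hrb w hw
    obtain ⟨w', rfl⟩ := hvq r w v hr.pos hw
    exact h1 r hr hrb ⟨w', by exact_mod_cast hw⟩
  by_cases hodd : Odd b
  · exact X_pow_sub_C_irreducible_of_odd hodd fun p hp hpb => h1' p hp hpb
  have h2b : 2 ∣ b := by
    rcases Nat.not_odd_iff_even.mp hodd with ⟨c, hc⟩
    exact ⟨c, by omega⟩
  set t := b.factorization 2 with htdef
  set m := b / 2 ^ t with hmdef
  have hbtm : 2 ^ t * m = b := Nat.ordProj_mul_ordCompl_eq_self b 2
  have hm2 : ¬ (2 ∣ m) := Nat.not_dvd_ordCompl Nat.prime_two hb.ne'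
  have hm_odd : Odd m := by
    rcases Nat.even_or_odd m with h | h
    · rcases h with ⟨c, hc⟩
      exact absurd ⟨c, by omega⟩ hm2
    · exact h
  have ht1 : 1 ≤ t := Nat.Prime.factorization_pos_of_dvd Nat.prime_two hb.ne' h2b
  have hsq : ∀ y : ℚ, y ^ 2 ≠ (v : ℚ) := h1' 2 Nat.prime_two h2b
  have h4 : 2 ≤ t → ∀ y : ℚ, (v : ℚ) ≠ -4 * y ^ 4 := by
    intro ht2 y hy
    have h4b : (4 : ℕ) ∣ b := by
      rw [← hbtm]
      exact Dvd.dvd.mul_right (by calc (4:ℕ) = 2^2 := rfl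
                                    _ ∣ 2^t := pow_dvd_pow 2 ht2) m
    have hz4 : (2 * y) ^ 4 = ((-4 * v : ℤ) : ℚ) := by
      push_cast
      linear_combination 4 * hy
    obtain ⟨z, hz⟩ := hvq 4 (2 * y) (-4 * v) (by norm_num) hz4
    have hz4' : z ^ 4 = -4 * v := by
      have : ((z : ℚ)) ^ 4 = ((-4 * v : ℤ) : ℚ) := by rw [hz]; exact hz4
      exact_mod_cast this
    have h2z : (2 : ℤ) ∣ z := by
      have : (2 : ℤ) ∣ z ^ 4 := ⟨-2 * v, by linarith⟩
      exact Int.Prime.dvd_pow' Nat.prime_two this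
    obtain ⟨j, rfl⟩ := h2z
    refine h2 h4b ⟨j, ?_⟩
    have : 16 * j ^ 4 = -4 * v := by linear_combination hz4'
    linarith
  rw [← hbtm]
  exact X_pow_mul_sub_C_irreducible
    (X_pow_sub_C_irreducible_of_odd hm_odd fun p hp hpm =>
      h1' p hp (hpm.trans ⟨2 ^ t, by rw [← hbtm]; ring⟩))
    (fun E _ _ x hx => capelli_main m t hm_odd _ hsq h4 ht1 E x hx)
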